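/- arXiv:1606.05077 — 2 statements merged into one kernel-verified Lean document; each statement's English description precedes it below -/
import Mathlib

section
/- The product of two almost-Riordan arrays of the form (g, g f/x, f) and (u, u v/x, v) equals (g·u(f), g·u(f)·v(f)/x, v(f)); hence the subset of almost-Riordan arrays of the form (g, g f/x, f) is closed under the product. -/
open PowerSeries Finset

/-- Shift: `shift h = (h - h₀)/x`, i.e. the series with coefficients `h₁, h₂, …`. -/
noncomputable def shift (h : PowerSeries ℤ) : PowerSeries ℤ :=
  PowerSeries.mk fun n => coeff (n + 1) h

/-- Composition `h ∘ f` of formal power series (intended for `f` with zero constant term,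
in which case `coeff n (f ^ k) = 0` for `k > n`). -/
noncomputable def comp (h f : PowerSeries ℤ) : PowerSeries ℤ :=
  PowerSeries.mk fun n => ∑ k ∈ Finset.range (n + 1), coeff k h * coeff n (f ^ k)

/-- Action of an almost-Riordan array `(a,g,f)` on a power series `b`:
`(a,g,f)·b = b₀ a + x g b̃(f)` where `b̃ = (b - b₀)/x`. -/
noncomputable def act (a g f b : PowerSeries ℤ) : PowerSeries ℤ :=
  C (coeff 0 b) * a + X * g * comp (shift b) f

/-- Product of almost-Riordan arrays: `(a,g,f)·(b,u,v) = ((a,g,f)·b, g·u(f), v(f))`. -/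
noncomputable def arMul (t s : PowerSeries ℤ × PowerSeries ℤ × PowerSeries ℤ) :
    PowerSeries ℤ × PowerSeries ℤ × PowerSeries ℤ :=
  (act t.1 t.2.1 t.2.2 s.1, t.2.1 * comp s.2.1 t.2.2, comp s.2.2 t.2.2)

/-- `(a,g,f)` is an almost-Riordan array: `a₀ = 1`, `g₀ = 1`, `f₀ = 0`, `f₁ = 1`. -/
def isAR (t : PowerSeries ℤ × PowerSeries ℤ × PowerSeries ℤ) : Prop :=
  coeff 0 t.1 = 1 ∧ coeff 0 t.2.1 = 1 ∧ coeff 0 t.2.2 = 0 ∧ coeff 1 t.2.2 = 1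

section lemmas

variable {f : PowerSeries ℤ}

lemma coeff_pow_zero (hf : coeff 0 f = 0) {n k : ℕ} (h : n < k) :
    coeff n (f ^ k) = 0 := by
  have hx : (X : PowerSeries ℤ) ∣ f := X_dvd_iff.mpr (by simpa using hf)
  exact PowerSeries.X_pow_dvd_iff.mp (pow_dvd_pow_of_dvd hx k) n h

lemma coeff_comp (h : PowerSeries ℤ) (n : ℕ) :
    coeff n (comp h f) = ∑ k ∈ Finset.range (n + 1), coeff k h * coeff n (f ^ k) := by
  simp [comp]

/-- `comp` agrees with polynomial evaluation of a long enough truncation. -/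
lemma coeff_comp_eq_eval₂ (hf : coeff 0 f = 0) (h : PowerSeries ℤ) {n N : ℕ} (hn : n < N) :
    coeff n (comp h f) = coeff n (Polynomial.eval₂ (C) f (trunc N h)) := by
  obtain ⟨m, rfl⟩ : ∃ m, N = m + 1 := ⟨N - 1, by omega⟩
  rw [Polynomial.eval₂_eq_sum_range' (C) (natDegree_trunc_lt h m) f, map_sum, coeff_comp]
  rw [Finset.sum_subset (Finset.range_subset_range.mpr (by omega : n + 1 ≤ m + 1))]
  · apply Finset.sum_congr rfl
    intro k hk
    rw [coeff_trunc, if_pos (Finset.mem_range.mp hk), coeff_C_mul]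
  · intro k _ hk
    rw [coeff_pow_zero hf (by simpa using hk), mul_zero]

lemma coeff_eval₂_X_pow_dvd (hf : coeff 0 f = 0) {p : Polynomial ℤ} {n : ℕ}
    (hp : (Polynomial.X : Polynomial ℤ) ^ (n + 1) ∣ p) :
    coeff n (Polynomial.eval₂ (C) f p) = 0 := by
  obtain ⟨q, rfl⟩ := hp
  rw [Polynomial.eval₂_mul, Polynomial.eval₂_X_pow]
  have hx : (X : PowerSeries ℤ) ∣ f := X_dvd_iff.mpr (by simpa using hf)
  have : (X : PowerSeries ℤ) ^ (n + 1) ∣ f ^ (n + 1) * Polynomial.eval₂ (C) f q :=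
    dvd_mul_of_dvd_left (pow_dvd_pow_of_dvd hx _) _
  exact PowerSeries.X_pow_dvd_iff.mp this n (by omega)

lemma comp_mul (hf : coeff 0 f = 0) (b c : PowerSeries ℤ) :
    comp (b * c) f = comp b f * comp c f := by
  ext n
  rw [PowerSeries.coeff_mul]
  have key : ∑ p ∈ Finset.HasAntidiagonal.antidiagonal n,
      coeff p.1 (comp b f) * coeff p.2 (comp c f) =
      ∑ p ∈ Finset.HasAntidiagonal.antidiagonal n,
      coeff p.1 (Polynomial.eval₂ (C) f (trunc (n+1) b)) *
      coeff p.2 (Polynomial.eval₂ (C) f (trunc (n+1) c)) := by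
    refine Finset.sum_congr rfl fun p hp => ?_
    have hpn := Finset.HasAntidiagonal.mem_antidiagonal.mp hp
    rw [coeff_comp_eq_eval₂ hf b (by omega : p.1 < n + 1),
        coeff_comp_eq_eval₂ hf c (by omega : p.2 < n + 1)]
  rw [key, ← PowerSeries.coeff_mul, ← Polynomial.eval₂_mul,
      coeff_comp_eq_eval₂ hf (b*c) (show n < 2*n + 2 by omega)]
  have hdvd : (Polynomial.X : Polynomial ℤ) ^ (n + 1) ∣
      trunc (n+1) b * trunc (n+1) c - trunc (2*n+2) (b*c) := by
    rw [Polynomial.X_pow_dvd_iff]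
    intro d hd
    rw [Polynomial.coeff_sub, coeff_trunc, if_pos (by omega : d < 2*n+2),
        coeff_mul_eq_coeff_trunc_mul_trunc b c (by omega : d < n + 1), ← Polynomial.coe_mul, Polynomial.coeff_coe, sub_self]
  have h0 := coeff_eval₂_X_pow_dvd hf hdvd (n := n)
  rw [Polynomial.eval₂_sub, map_sub] at h0
  linarith [h0]

lemma comp_add (b c : PowerSeries ℤ) : comp (b + c) f = comp b f + comp c f := by
  ext n
  simp [comp, add_mul, Finset.sum_add_distrib]

lemma comp_C (r : ℤ) : comp (C r) f = C r := by
  ext n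
  rw [coeff_comp, Finset.sum_eq_single 0]
  · rw [PowerSeries.coeff_C, PowerSeries.coeff_C, if_pos rfl, pow_zero, PowerSeries.coeff_one]
    split_ifs with h <;> simp [h]
  · intro k _ hk
    rw [PowerSeries.coeff_C, if_neg hk, zero_mul]
  · simp

lemma comp_X (hf : coeff 0 f = 0) : comp X f = f := by
  ext n
  rw [coeff_comp, Finset.sum_eq_single 1]
  · simp
  · intro k _ hk
    simp [PowerSeries.coeff_X, hk]
  · intro h1
    have hn : n = 0 := by simpa using h1
    simp [hn, PowerSeries.coeff_X, hf]

lemma shift_X_mul (w : PowerSeries ℤ) : shift (X * w) = w := by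
  ext n
  simp [shift, PowerSeries.coeff_succ_X_mul]

lemma eq_X_mul_shift (h : PowerSeries ℤ) (h0 : coeff 0 h = 0) : h = X * shift h := by
  have := PowerSeries.eq_X_mul_shift_add_const h
  rw [← coeff_zero_eq_constantCoeff_apply, h0, map_zero, add_zero] at this
  exact this

end lemmas

/-- `(g, gf/x, f)·(u, uv/x, v) = (g u(f), g u(f) v(f)/x, v(f))`:
the embedded copy of the Riordan group is closed under multiplication.
Note `f/x = shift f` since `f` has zero constant term. -/
theorem statement8 (g f u v : PowerSeries ℤ)
    (hg : coeff 0 g = 1) (hf0 : coeff 0 f = 0) (hf1 : coeff 1 f = 1)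
    (hu : coeff 0 u = 1) (hv0 : coeff 0 v = 0) (hv1 : coeff 1 v = 1) :
    arMul (g, g * shift f, f) (u, u * shift v, v) =
      (g * comp u f, (g * comp u f) * shift (comp v f), comp v f) := by
  have hf : f = X * shift f := eq_X_mul_shift f hf0
  have hu' : u = X * shift u + C 1 := by
    have := PowerSeries.eq_X_mul_shift_add_const u
    rw [← coeff_zero_eq_constantCoeff_apply, hu] at this
    exact this
  have hcompu : comp u f = f * comp (shift u) f + 1 := by
    conv_lhs => rw [hu', comp_add, comp_C, comp_mul hf0 X (shift u), comp_X hf0]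
    rw [map_one]
  have hcompv : comp v f = f * comp (shift v) f := by
    conv_lhs => rw [eq_X_mul_shift v hv0, comp_mul hf0 X (shift v), comp_X hf0]
  have hcompv2 : comp v f = X * (shift f * comp (shift v) f) := by
    rw [hcompv]
    linear_combination (comp (shift v) f) * hf
  have hshiftcompv : shift (comp v f) = shift f * comp (shift v) f := by
    rw [hcompv2, shift_X_mul]
  refine Prod.ext ?_ (Prod.ext ?_ ?_)
  · show act g (g * shift f) f u = g * comp u f
    rw [act, hu, map_one, one_mul, hcompu]
    linear_combination (-(g * comp (shift u) f)) * hf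
  · show (g * shift f) * comp (u * shift v) f = (g * comp u f) * shift (comp v f)
    rw [comp_mul hf0 u (shift v), hshiftcompv]
    ring
  · rfl
end

section
/- The inverse of the almost-Riordan array (g, g f/x, f) is (1/(g∘f̄), (1/(g∘f̄))·(f̄/x), f̄); hence the subset of elements of the form (g, g f/x, f) is closed under inversion. -/
open PowerSeries Finset

section Aux

lemma ar_coeff_pow_eq_zero {f : PowerSeries ℤ} (hf : coeff 0 f = 0)
    {n k : ℕ} (h : n < k) : coeff n (f ^ k) = 0 := by
  have hX : (X : PowerSeries ℤ) ∣ f := PowerSeries.X_dvd_iff.mpr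
    (by rw [← coeff_zero_eq_constantCoeff_apply]; exact hf)
  have hd : (X : PowerSeries ℤ) ^ k ∣ f ^ k := pow_dvd_pow_of_dvd hX k
  exact (PowerSeries.X_pow_dvd_iff.mp hd) n h

lemma ar_coeff_comp (h f : PowerSeries ℤ) (n : ℕ) :
    coeff n (comp h f) = ∑ k ∈ Finset.range (n + 1), coeff k h * coeff n (f ^ k) := by
  simp [comp]

lemma ar_coeff_comp_ext {f : PowerSeries ℤ} (hf : coeff 0 f = 0) (h : PowerSeries ℤ)
    {n N : ℕ} (hN : n < N) :
    coeff n (comp h f) = ∑ k ∈ Finset.range N, coeff k h * coeff n (f ^ k) := by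
  rw [ar_coeff_comp]
  refine Finset.sum_subset (Finset.range_subset_range.mpr hN) ?_
  intro k _ hk'
  have hk : n < k := by
    have := Finset.mem_range.not.mp hk'
    omega
  rw [ar_coeff_pow_eq_zero hf hk, mul_zero]

lemma ar_comp_C (c : ℤ) (f : PowerSeries ℤ) : comp (C c) f = C c := by
  ext n
  rw [ar_coeff_comp]
  have hterm : ∀ k ∈ Finset.range (n + 1), coeff k (C c) * coeff n (f ^ k)
      = if k = 0 then c * coeff n 1 else 0 := by
    intro k _
    rcases eq_or_ne k 0 with rfl | hk
    · simp
    · rw [if_neg hk, PowerSeries.coeff_C, if_neg hk, zero_mul]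
  rw [Finset.sum_congr rfl hterm, Finset.sum_ite_eq' (Finset.range (n + 1)) 0]
  rw [if_pos (Finset.mem_range.mpr (Nat.succ_pos n))]
  rcases eq_or_ne n 0 with rfl | hn
  · simp
  · rw [PowerSeries.coeff_C, if_neg hn, PowerSeries.coeff_one, if_neg hn, mul_zero]

lemma ar_comp_one (f : PowerSeries ℤ) : comp 1 f = 1 := by
  have := ar_comp_C 1 f
  simpa using this

lemma ar_comp_zero (f : PowerSeries ℤ) : comp 0 f = 0 := by
  have := ar_comp_C 0 f
  simpa using this

lemma ar_comp_add (u v f : PowerSeries ℤ) : comp (u + v) f = comp u f + comp v f := by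
  ext n
  simp [ar_coeff_comp, add_mul, Finset.sum_add_distrib]

lemma ar_comp_X {f : PowerSeries ℤ} (hf : coeff 0 f = 0) : comp X f = f := by
  ext n
  rw [ar_coeff_comp]
  rw [Finset.sum_eq_single 1]
  · simp
  · intro k _ hk
    rw [PowerSeries.coeff_X, if_neg hk, zero_mul]
  · intro h
    simp only [Finset.mem_range] at h
    have hn : n = 0 := by omega
    subst hn
    simpa using hf

lemma ar_comp_id (h : PowerSeries ℤ) : comp h X = h := by
  ext n
  rw [ar_coeff_comp]
  rw [Finset.sum_eq_single n]
  · simp [PowerSeries.coeff_X_pow]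
  · intro k _ hk
    rw [PowerSeries.coeff_X_pow, if_neg (by omega), mul_zero]
  · intro h; simp at h

lemma ar_comp_mul {f : PowerSeries ℤ} (hf : coeff 0 f = 0) (u v : PowerSeries ℤ) :
    comp (u * v) f = comp u f * comp v f := by
  ext n
  set F : ℕ × ℕ → ℤ := fun ij => coeff ij.1 u * coeff ij.2 v * coeff n (f ^ (ij.1 + ij.2))
    with hF
  set A := Finset.range (n + 1) with hA
  have hvan : ∀ ij : ℕ × ℕ, n < ij.1 + ij.2 → F ij = 0 := by
    intro ij h
    rw [hF]; dsimp only
    rw [ar_coeff_pow_eq_zero hf h, mul_zero]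
  have hdisj : (↑A : Set ℕ).PairwiseDisjoint (fun k => Finset.HasAntidiagonal.antidiagonal k) := by
    intro a _ b _ hab
    simp only [Function.onFun, Finset.disjoint_left]
    intro ij h1 h2
    exact hab ((Finset.HasAntidiagonal.mem_antidiagonal.mp h1).symm.trans (Finset.HasAntidiagonal.mem_antidiagonal.mp h2))
  have hL : coeff n (comp (u * v) f) = ∑ ij ∈ A ×ˢ A, F ij := by
    rw [ar_coeff_comp]
    have step1 : ∀ k ∈ A, coeff k (u * v) * coeff n (f ^ k)
        = ∑ ij ∈ Finset.HasAntidiagonal.antidiagonal k, F ij := by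
      intro k _
      rw [PowerSeries.coeff_mul, Finset.sum_mul]
      refine Finset.sum_congr rfl ?_
      intro ij hij
      rw [hF]; dsimp only
      rw [Finset.HasAntidiagonal.mem_antidiagonal.mp hij]
    rw [Finset.sum_congr rfl step1, ← Finset.sum_biUnion hdisj]
    refine Finset.sum_subset ?_ ?_
    · intro ij hij
      obtain ⟨k, hk, hk2⟩ := Finset.mem_biUnion.mp hij
      have := Finset.HasAntidiagonal.mem_antidiagonal.mp hk2
      simp only [hA, Finset.mem_range] at hk
      simp only [hA, Finset.mem_product, Finset.mem_range]
      omega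
    · intro ij hij hij'
      refine hvan ij ?_
      by_contra hle
      push_neg at hle
      exact hij' (Finset.mem_biUnion.mpr ⟨ij.1 + ij.2, Finset.mem_range.mpr (by omega),
        Finset.HasAntidiagonal.mem_antidiagonal.mpr rfl⟩)
  have hR : coeff n (comp u f * comp v f) = ∑ ij ∈ A ×ˢ A, F ij := by
    rw [PowerSeries.coeff_mul]
    have step1 : ∀ pq ∈ Finset.HasAntidiagonal.antidiagonal n,
        coeff pq.1 (comp u f) * coeff pq.2 (comp v f)
        = ∑ i ∈ A, ∑ j ∈ A, (coeff i u * coeff pq.1 (f ^ i))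
            * (coeff j v * coeff pq.2 (f ^ j)) := by
      intro pq hpq
      have hmem := Finset.HasAntidiagonal.mem_antidiagonal.mp hpq
      rw [ar_coeff_comp_ext hf u (show pq.1 < n + 1 by omega),
        ar_coeff_comp_ext hf v (show pq.2 < n + 1 by omega),
        Finset.sum_mul_sum]
    rw [Finset.sum_congr rfl step1, Finset.sum_comm]
    rw [Finset.sum_product]
    refine Finset.sum_congr rfl ?_
    intro i _
    rw [Finset.sum_comm]
    refine Finset.sum_congr rfl ?_
    intro j _
    rw [hF]; dsimp only
    rw [pow_add, PowerSeries.coeff_mul, Finset.mul_sum]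
    refine Finset.sum_congr rfl ?_
    intro pq _
    ring
  rw [hL, hR]

lemma ar_comp_sub (u v f : PowerSeries ℤ) : comp (u - v) f = comp u f - comp v f := by
  have h := ar_comp_add (u - v) v f
  rw [sub_add_cancel] at h
  rw [h]; ring

lemma ar_comp_pow {f : PowerSeries ℤ} (hf : coeff 0 f = 0) (u : PowerSeries ℤ) (k : ℕ) :
    comp (u ^ k) f = comp u f ^ k := by
  induction k with
  | zero => simpa using ar_comp_one f
  | succ k ih => rw [pow_succ, pow_succ, ar_comp_mul hf, ih]

lemma ar_comp_sum {f : PowerSeries ℤ} (s : Finset ℕ) (F : ℕ → PowerSeries ℤ) :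
    comp (∑ k ∈ s, F k) f = ∑ k ∈ s, comp (F k) f := by
  induction s using Finset.induction with
  | empty => simpa using ar_comp_zero f
  | insert _ _ hx ih =>
    rw [Finset.sum_insert hx, Finset.sum_insert hx, ar_comp_add, ih]

lemma ar_coeff_zero_comp (h f : PowerSeries ℤ) : coeff 0 (comp h f) = coeff 0 h := by
  rw [ar_coeff_comp]
  simp

noncomputable def arS (N : ℕ) (h f : PowerSeries ℤ) : PowerSeries ℤ :=
  ∑ k ∈ Finset.range N, C (coeff k h) * f ^ k

lemma ar_dvd_comp_sub_arS {f : PowerSeries ℤ} (hf : coeff 0 f = 0)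
    (h : PowerSeries ℤ) (N : ℕ) :
    (X : PowerSeries ℤ) ^ N ∣ comp h f - arS N h f := by
  rw [PowerSeries.X_pow_dvd_iff]
  intro m hm
  rw [map_sub, ar_coeff_comp_ext hf h hm, arS, map_sum, sub_eq_zero]
  refine Finset.sum_congr rfl ?_
  intro k _
  rw [PowerSeries.coeff_C_mul]

lemma ar_dvd_comp {f : PowerSeries ℤ} (hf : coeff 0 f = 0)
    {d : PowerSeries ℤ} {N : ℕ} (hd : (X : PowerSeries ℤ) ^ N ∣ d) :
    (X : PowerSeries ℤ) ^ N ∣ comp d f := by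
  obtain ⟨m, rfl⟩ := hd
  rw [ar_comp_mul hf, ar_comp_pow hf, ar_comp_X hf]
  have hXf : (X : PowerSeries ℤ) ∣ f := PowerSeries.X_dvd_iff.mpr
    (by rw [← coeff_zero_eq_constantCoeff_apply]; exact hf)
  exact Dvd.dvd.mul_right (pow_dvd_pow_of_dvd hXf N) _

lemma ar_comp_arS {b c : PowerSeries ℤ} (hc : coeff 0 c = 0) (h : PowerSeries ℤ) (N : ℕ) :
    comp (arS N h b) c = arS N h (comp b c) := by
  rw [arS, ar_comp_sum, arS]
  refine Finset.sum_congr rfl ?_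
  intro k _
  rw [ar_comp_mul hc, ar_comp_C, ar_comp_pow hc]

lemma ar_comp_comp {b c : PowerSeries ℤ} (hb : coeff 0 b = 0) (hc : coeff 0 c = 0)
    (h : PowerSeries ℤ) : comp (comp h b) c = comp h (comp b c) := by
  ext n
  have hbc : coeff 0 (comp b c) = 0 := by rw [ar_coeff_zero_comp, hb]
  set N := n + 1 with hN
  have d1 : (X : PowerSeries ℤ) ^ N ∣ comp (comp h b) c - comp (arS N h b) c := by
    rw [← ar_comp_sub]
    exact ar_dvd_comp hc (ar_dvd_comp_sub_arS hb h N)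
  have d2 : (X : PowerSeries ℤ) ^ N ∣ arS N h (comp b c) - comp h (comp b c) := by
    have h2 := ar_dvd_comp_sub_arS hbc h N
    rw [← neg_sub]
    exact dvd_neg.mpr h2
  have d3 : (X : PowerSeries ℤ) ^ N ∣ comp (comp h b) c - comp h (comp b c) := by
    have := dvd_add d1 d2
    rw [ar_comp_arS hc] at this
    convert this using 1
    ring
  have := PowerSeries.X_pow_dvd_iff.mp d3 n (by omega)
  rw [map_sub, sub_eq_zero] at this
  exact this

lemma ar_X_mul_shift {h : PowerSeries ℤ} (h0 : coeff 0 h = 0) : X * shift h = h := by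
  ext n
  cases n with
  | zero => simp [h0]
  | succ n => rw [PowerSeries.coeff_succ_X_mul]; simp [shift]

lemma ar_C_add_X_mul_shift (h : PowerSeries ℤ) :
    C (coeff 0 h) + X * shift h = h := by
  ext n
  cases n with
  | zero => simp [PowerSeries.coeff_C]
  | succ n =>
    rw [map_add, PowerSeries.coeff_succ_X_mul, PowerSeries.coeff_C,
      if_neg (Nat.succ_ne_zero n), zero_add]
    simp [shift]

end Aux


/-- `(g, gf/x, f)⁻¹ = (1/(g∘f̄), (1/(g∘f̄))·(f̄/x), f̄)`:
the embedded copy of the Riordan group is closed under inversion.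
Here `fi = f̄` and `gi = 1/(g∘f̄)`. -/
theorem statement9 (g f fi gi : PowerSeries ℤ)
    (hg : coeff 0 g = 1) (hf0 : coeff 0 f = 0) (hf1 : coeff 1 f = 1)
    (hfi0 : coeff 0 fi = 0)
    (hffi : comp f fi = X) (hfif : comp fi f = X)
    (hgi : comp g fi * gi = 1) :
    arMul (g, g * shift f, f) (gi, gi * shift fi, fi) = (1, 1, X) ∧
    arMul (gi, gi * shift fi, fi) (g, g * shift f, f) = (1, 1, X) := by
  have hXf : X * shift f = f := ar_X_mul_shift hf0
  have hXfi : X * shift fi = fi := ar_X_mul_shift hfi0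
  have hcg : coeff 0 (comp g fi) = 1 := by rw [ar_coeff_zero_comp, hg]
  have hgi0 : coeff 0 gi = 1 := by
    have h0 := congrArg (coeff 0) hgi
    rw [coeff_zero_eq_constantCoeff_apply, map_mul,
      ← coeff_zero_eq_constantCoeff_apply, ← coeff_zero_eq_constantCoeff_apply, hcg,
      one_mul] at h0
    simpa using h0
  have h1 : g * comp gi f = 1 := by
    have e1 : comp (comp g fi * gi) f = 1 := by rw [hgi, ar_comp_one]
    rw [ar_comp_mul hf0, ar_comp_comp hfi0 hf0, hfif, ar_comp_id] at e1
    exact e1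
  have h1' : gi * comp g fi = 1 := by rw [mul_comm]; exact hgi
  have h2 : shift f * comp (shift fi) f = 1 := by
    have e2 : X * (shift f * comp (shift fi) f) = X * 1 := by
      rw [mul_one]
      calc X * (shift f * comp (shift fi) f)
          = (X * shift f) * comp (shift fi) f := by ring
        _ = f * comp (shift fi) f := by rw [hXf]
        _ = comp X f * comp (shift fi) f := by rw [ar_comp_X hf0]
        _ = comp (X * shift fi) f := by rw [← ar_comp_mul hf0]
        _ = comp fi f := by rw [hXfi]
        _ = X := hfif
    exact mul_left_cancel₀ PowerSeries.X_ne_zero e2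
  have h2' : shift fi * comp (shift f) fi = 1 := by
    have e2 : X * (shift fi * comp (shift f) fi) = X * 1 := by
      rw [mul_one]
      calc X * (shift fi * comp (shift f) fi)
          = (X * shift fi) * comp (shift f) fi := by ring
        _ = fi * comp (shift f) fi := by rw [hXfi]
        _ = comp X fi * comp (shift f) fi := by rw [ar_comp_X hfi0]
        _ = comp (X * shift f) fi := by rw [← ar_comp_mul hfi0]
        _ = comp f fi := by rw [hXf]
        _ = X := hffi
    exact mul_left_cancel₀ PowerSeries.X_ne_zero e2
  have h3 : comp gi f = 1 + f * comp (shift gi) f := by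
    conv_lhs => rw [← ar_C_add_X_mul_shift gi]
    rw [ar_comp_add, hgi0, map_one, ar_comp_mul hf0, ar_comp_X hf0, ar_comp_one]
  have h3' : comp g fi = 1 + fi * comp (shift g) fi := by
    conv_lhs => rw [← ar_C_add_X_mul_shift g]
    rw [ar_comp_add, hg, map_one, ar_comp_mul hfi0, ar_comp_X hfi0, ar_comp_one]
  have first1 : act g (g * shift f) f gi = 1 := by
    rw [act, hgi0, map_one, one_mul]
    have hx : X * (g * shift f) = g * f := by
      conv_rhs => rw [← hXf]
      ring
    rw [hx]
    calc g + g * f * comp (shift gi) f = g * (1 + f * comp (shift gi) f) := by ring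
      _ = g * comp gi f := by rw [← h3]
      _ = 1 := h1
  have second1 : (g * shift f) * comp (gi * shift fi) f = 1 := by
    rw [ar_comp_mul hf0]
    calc g * shift f * (comp gi f * comp (shift fi) f)
        = (g * comp gi f) * (shift f * comp (shift fi) f) := by ring
      _ = 1 := by rw [h1, h2, mul_one]
  have first2 : act gi (gi * shift fi) fi g = 1 := by
    rw [act, hg, map_one, one_mul]
    have hx : X * (gi * shift fi) = gi * fi := by
      conv_rhs => rw [← hXfi]
      ring
    rw [hx]
    calc gi + gi * fi * comp (shift g) fi = gi * (1 + fi * comp (shift g) fi) := by ring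
      _ = gi * comp g fi := by rw [← h3']
      _ = 1 := h1'
  have second2 : (gi * shift fi) * comp (g * shift f) fi = 1 := by
    rw [ar_comp_mul hfi0]
    calc gi * shift fi * (comp g fi * comp (shift f) fi)
        = (gi * comp g fi) * (shift fi * comp (shift f) fi) := by ring
      _ = 1 := by rw [h1', h2', mul_one]
  constructor
  · simp only [arMul, Prod.mk.injEq]
    exact ⟨first1, second1, hfif⟩
  · simp only [arMul, Prod.mk.injEq]
    exact ⟨first2, second2, hffi⟩
end
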